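/- arXiv:1801.04707 — 2 statements merged into one kernel-verified Lean document; each statement's English description precedes it below -/
import Mathlib

section
/- Let U, P1, P2 be reflexive Banach spaces and let b1 : P1 × U → ℝ and b2 : P2 × U → ℝ be bounded bilinear forms. Define Z_{b2} = {v ∈ U : b2(p2, v) = 0 for all p2 ∈ P2}. Then the following are equivalent: (1) there exists c > 0 such that for all (p1, p2) ∈ P1 × P2, sup_{v ∈ U, v ≠ 0} (b1(p1, v) + b2(p2, v)) / ‖v‖_U ≥ c(‖p1‖ + ‖p2‖); (2) there exists c > 0 such that sup_{v ∈ Z_{b2}, v ≠ 0} b1(p1, v)/‖v‖_U ≥ c‖p1‖ for all p1 ∈ P1, and sup_{v ∈ U, v ≠ 0} b2(p2, v)/‖v‖_U ≥ c‖p2‖ for all p2 ∈ P2. -/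
open NormedSpace

section hwaux
variable {U : Type*} [NormedAddCommGroup U] [NormedSpace ℝ U]

/-- Norm of the restriction of a functional to a submodule is bounded by the
corresponding sup over nonzero elements of the submodule. -/
lemma hw_restrict_le_iSup (Z : Submodule ℝ U) (f : U →L[ℝ] ℝ) :
    ‖f.comp Z.subtypeL‖ ≤ ⨆ v : {v : U // v ∈ Z ∧ v ≠ 0}, f v.1 / ‖v.1‖ := by
  by_cases h : Nonempty {v : U // v ∈ Z ∧ v ≠ 0}
  · set m := ⨆ v : {v : U // v ∈ Z ∧ v ≠ 0}, f v.1 / ‖v.1‖ with hm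
    have hbdd : BddAbove (Set.range fun v : {v : U // v ∈ Z ∧ v ≠ 0} => f v.1 / ‖v.1‖) := by
      refine ⟨‖f‖, ?_⟩
      rintro x ⟨v, rfl⟩
      have hv : 0 < ‖v.1‖ := norm_pos_iff.2 v.2.2
      rw [div_le_iff₀ hv]
      exact (le_abs_self _).trans (f.le_opNorm v.1)
    have key : ∀ v : U, v ∈ Z → v ≠ 0 → f v ≤ m * ‖v‖ := by
      intro v hvZ hv0
      have h1 : f v / ‖v‖ ≤ m := le_ciSup hbdd ⟨v, hvZ, hv0⟩
      have hv : 0 < ‖v‖ := norm_pos_iff.2 hv0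
      calc f v = (f v / ‖v‖) * ‖v‖ := by field_simp
        _ ≤ m * ‖v‖ := by gcongr
    have hm0 : 0 ≤ m := by
      obtain ⟨v, hvZ, hv0⟩ := h
      have h1 := key v hvZ hv0
      have h2 := key (-v) (Z.neg_mem hvZ) (neg_ne_zero.2 hv0)
      simp only [map_neg, norm_neg] at h2
      have hv : 0 < ‖v‖ := norm_pos_iff.2 hv0
      nlinarith
    refine ContinuousLinearMap.opNorm_le_bound _ hm0 ?_
    rintro ⟨w, hw⟩
    by_cases hw0 : w = 0
    · simp [hw0]
    · have h1 := key w hw hw0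
      have h2 := key (-w) (Z.neg_mem hw) (neg_ne_zero.2 hw0)
      simp only [map_neg, norm_neg] at h2
      have hnw : ‖(⟨w, hw⟩ : Z)‖ = ‖w‖ := rfl
      simp only [ContinuousLinearMap.comp_apply, Submodule.subtypeL_apply]
      rw [Real.norm_eq_abs, abs_le, hnw]
      constructor <;> linarith
  · rw [not_nonempty_iff] at h
    rw [Real.iSup_of_isEmpty]
    refine ContinuousLinearMap.opNorm_le_bound _ le_rfl ?_
    rintro ⟨w, hw⟩
    have hw0 : w = 0 := by
      by_contra hne
      exact h.false ⟨w, hw, hne⟩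
    simp [hw0]

/-- Norm of a functional is bounded by the sup over nonzero vectors. -/
lemma hw_norm_le_iSup (f : U →L[ℝ] ℝ) :
    ‖f‖ ≤ ⨆ v : {v : U // v ≠ 0}, f v.1 / ‖v.1‖ := by
  by_cases h : Nonempty {v : U // v ≠ 0}
  · set m := ⨆ v : {v : U // v ≠ 0}, f v.1 / ‖v.1‖ with hm
    have hbdd : BddAbove (Set.range fun v : {v : U // v ≠ 0} => f v.1 / ‖v.1‖) := by
      refine ⟨‖f‖, ?_⟩
      rintro x ⟨v, rfl⟩
      have hv : 0 < ‖v.1‖ := norm_pos_iff.2 v.2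
      rw [div_le_iff₀ hv]
      exact (le_abs_self _).trans (f.le_opNorm v.1)
    have key : ∀ v : U, v ≠ 0 → f v ≤ m * ‖v‖ := by
      intro v hv0
      have h1 : f v / ‖v‖ ≤ m := le_ciSup hbdd ⟨v, hv0⟩
      have hv : 0 < ‖v‖ := norm_pos_iff.2 hv0
      calc f v = (f v / ‖v‖) * ‖v‖ := by field_simp
        _ ≤ m * ‖v‖ := by gcongr
    have hm0 : 0 ≤ m := by
      obtain ⟨v, hv0⟩ := h
      have h1 := key v hv0
      have h2 := key (-v) (neg_ne_zero.2 hv0)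
      simp only [map_neg, norm_neg] at h2
      have hv : 0 < ‖v‖ := norm_pos_iff.2 hv0
      nlinarith
    refine ContinuousLinearMap.opNorm_le_bound _ hm0 ?_
    intro w
    by_cases hw0 : w = 0
    · simp [hw0]
    · have h1 := key w hw0
      have h2 := key (-w) (neg_ne_zero.2 hw0)
      simp only [map_neg, norm_neg] at h2
      rw [Real.norm_eq_abs, abs_le]
      constructor <;> linarith
  · rw [not_nonempty_iff] at h
    rw [Real.iSup_of_isEmpty]
    refine ContinuousLinearMap.opNorm_le_bound _ le_rfl ?_
    intro w
    have hw0 : w = 0 := by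
      by_contra hne
      exact h.false ⟨w, hne⟩
    simp [hw0]

end hwaux


section hwker
variable {U P2 : Type*} [NormedAddCommGroup U] [NormedSpace ℝ U]
  [NormedAddCommGroup P2] [NormedSpace ℝ P2]

/-- The kernel of `b2` in its second argument, as a submodule of `U`. -/
def hwKer (b2 : P2 →L[ℝ] U →L[ℝ] ℝ) : Submodule ℝ U where
  carrier := {v | ∀ p2 : P2, b2 p2 v = 0}
  add_mem' := fun {x y} hx hy p2 => by simp [map_add, hx p2, hy p2]
  zero_mem' := fun p2 => by simp
  smul_mem' := fun c v hv p2 => by simp [hv p2]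

end hwker




/-- Howell–Walkington combined inf-sup equivalence (reduced version of Theorem 3.1). -/
theorem stmt_0 {U P1 P2 : Type*}
    [NormedAddCommGroup U] [NormedSpace ℝ U] [CompleteSpace U]
    [NormedAddCommGroup P1] [NormedSpace ℝ P1] [CompleteSpace P1]
    [NormedAddCommGroup P2] [NormedSpace ℝ P2] [CompleteSpace P2]
    -- reflexivity of the three Banach spaces
    (hUrefl : Function.Surjective ⇑(NormedSpace.inclusionInDoubleDual ℝ U))
    (hP1refl : Function.Surjective ⇑(NormedSpace.inclusionInDoubleDual ℝ P1))
    (hP2refl : Function.Surjective ⇑(NormedSpace.inclusionInDoubleDual ℝ P2))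
    (b1 : P1 →L[ℝ] U →L[ℝ] ℝ) (b2 : P2 →L[ℝ] U →L[ℝ] ℝ) :
    (∃ c > 0, ∀ (p1 : P1) (p2 : P2),
        c * (‖p1‖ + ‖p2‖) ≤ ⨆ v : {v : U // v ≠ 0}, (b1 p1 v.1 + b2 p2 v.1) / ‖v.1‖)
    ↔
    (∃ c > 0,
      (∀ p1 : P1,
        c * ‖p1‖ ≤ ⨆ v : {v : U // (∀ p2 : P2, b2 p2 v = 0) ∧ v ≠ 0}, b1 p1 v.1 / ‖v.1‖) ∧
      (∀ p2 : P2,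
        c * ‖p2‖ ≤ ⨆ v : {v : U // v ≠ 0}, b2 p2 v.1 / ‖v.1‖)) := by
  constructor
  · rintro ⟨c, hc, H⟩
    -- key norm inequality
    have K : ∀ (p1 : P1) (p2 : P2), c * (‖p1‖ + ‖p2‖) ≤ ‖b1 p1 + b2 p2‖ := by
      intro p1 p2
      refine (H p1 p2).trans (Real.iSup_le ?_ (norm_nonneg _))
      rintro ⟨v, hv⟩
      have hvp : 0 < ‖v‖ := norm_pos_iff.2 hv
      rw [div_le_iff₀ hvp]
      have h1 : (b1 p1 + b2 p2) v = b1 p1 v + b2 p2 v := rfl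
      calc b1 p1 v + b2 p2 v ≤ |(b1 p1 + b2 p2) v| := by rw [h1]; exact le_abs_self _
        _ ≤ ‖b1 p1 + b2 p2‖ * ‖v‖ := (b1 p1 + b2 p2).le_opNorm v
    refine ⟨c, hc, ?_, ?_⟩
    · -- kernel inf-sup condition
      intro p1
      set Z : Submodule ℝ U := hwKer b2 with hZ
      obtain ⟨F, hFext, hFnorm⟩ := exists_extension_norm_eq Z ((b1 p1).comp Z.subtypeL)
      set g : U →L[ℝ] ℝ := b1 p1 - F with hg
      have hgZ : ∀ v ∈ Z, g v = 0 := by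
        intro v hv
        have := hFext ⟨v, hv⟩
        simp only [ContinuousLinearMap.comp_apply, Submodule.subtypeL_apply] at this
        simp [hg, ContinuousLinearMap.sub_apply, this]
      set R : Submodule ℝ (U →L[ℝ] ℝ) := LinearMap.range (b2 : P2 →ₗ[ℝ] U →L[ℝ] ℝ) with hR
      have hgR : g ∈ closure (R : Set (U →L[ℝ] ℝ)) := by
        by_contra hgnot
        obtain ⟨Φ, u, hΦR, hΦg⟩ :=
          geometric_hahn_banach_closed_point R.convex.closure isClosed_closure hgnot
        have hΦ0 : ∀ p2 : P2, Φ (b2 p2) = 0 := by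
            intro p2
            by_contra hne
            set a := Φ (b2 p2) with ha
            set t : ℝ := (max u 0 + 1) / a with ht
            have hmem : b2 (t • p2) ∈ closure (R : Set (U →L[ℝ] ℝ)) :=
              subset_closure ⟨t • p2, rfl⟩
            have h1 := hΦR _ hmem
            have h2 : Φ (b2 (t • p2)) = t * a := by
              rw [map_smul, map_smul]; simp [smul_eq_mul, ha]
            rw [h2, ht] at h1
            rw [div_mul_cancel₀ _ hne] at h1
            have : u ≤ max u 0 := le_max_left _ _
            linarith
        obtain ⟨v, hv⟩ := hUrefl Φ
        have hvΦ : ∀ φ : U →L[ℝ] ℝ, φ v = Φ φ := by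
          intro φ
          rw [← hv]; rfl
        have hvZ : v ∈ Z := by
          intro p2
          rw [hvΦ (b2 p2)]; exact hΦ0 p2
        have h0mem : (0 : U →L[ℝ] ℝ) ∈ closure (R : Set (U →L[ℝ] ℝ)) :=
          subset_closure R.zero_mem
        have h1 := hΦR 0 h0mem
        rw [map_zero] at h1
        have h2 : Φ g = 0 := by rw [← hvΦ g]; exact hgZ v hvZ
        rw [h2] at hΦg
        linarith
      have hkey : ∀ ε > 0, c * ‖p1‖ ≤ ‖(b1 p1).comp Z.subtypeL‖ + ε := by
        intro ε hε
        have hngR : (-g) ∈ closure (R : Set (U →L[ℝ] ℝ)) := by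
          have : (-g) ∈ R.topologicalClosure := by
            refine neg_mem ?_
            rwa [← Submodule.topologicalClosure_coe, SetLike.mem_coe] at hgR
            -- membership coercion
          rwa [← SetLike.mem_coe, Submodule.topologicalClosure_coe] at this
        rw [Metric.mem_closure_iff] at hngR
        obtain ⟨y, ⟨p2, rfl⟩, hy⟩ := hngR ε hε
        simp only [ContinuousLinearMap.coe_coe] at hy
        have hnorm : ‖b1 p1 + b2 p2‖ ≤ ‖F‖ + ε := by
          have heq : b1 p1 + b2 p2 = F + (b2 p2 - (-g)) := by
            rw [hg]; abel
          rw [heq]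
          refine (norm_add_le _ _).trans ?_
          have : ‖b2 p2 - (-g)‖ = dist (-g) (b2 p2) := by
            rw [dist_eq_norm, ← norm_neg]; congr 1; abel
          rw [this]
          linarith
        have h1 : c * ‖p1‖ ≤ c * (‖p1‖ + ‖p2‖) := by nlinarith [norm_nonneg p2]
        calc c * ‖p1‖ ≤ ‖b1 p1 + b2 p2‖ := h1.trans (K p1 p2)
          _ ≤ ‖F‖ + ε := hnorm
          _ = ‖(b1 p1).comp Z.subtypeL‖ + ε := by rw [hFnorm]
      have hle : c * ‖p1‖ ≤ ‖(b1 p1).comp Z.subtypeL‖ := by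
        by_contra hlt
        push_neg at hlt
        have := hkey ((c * ‖p1‖ - ‖(b1 p1).comp Z.subtypeL‖) / 2) (by linarith)
        linarith
      exact hle.trans (hw_restrict_le_iSup Z (b1 p1))
    · intro p2
      have h1 := K 0 p2
      simp only [norm_zero, zero_add, map_zero] at h1
      refine h1.trans ?_
      exact hw_norm_le_iSup (b2 p2)
  · rintro ⟨c, hc, h1, h2⟩
    set M := ‖b1‖ with hM
    have hM0 : 0 ≤ M := by rw [hM]; exact norm_nonneg b1
    refine ⟨c * c / (2 * (c + M)), by positivity, ?_⟩
    intro p1 p2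
    set N := ‖b1 p1 + b2 p2‖ with hN
    have hN0 : 0 ≤ N := norm_nonneg _
    -- c * ‖p1‖ ≤ N via the kernel sup
    have hA : c * ‖p1‖ ≤ N := by
      refine (h1 p1).trans (Real.iSup_le ?_ hN0)
      rintro ⟨v, hvZ, hv0⟩
      have hvp : 0 < ‖v‖ := norm_pos_iff.2 hv0
      rw [div_le_iff₀ hvp]
      have heq : b1 p1 v = (b1 p1 + b2 p2) v := by
        simp [ContinuousLinearMap.add_apply, hvZ p2]
      rw [heq]
      exact (le_abs_self _).trans ((b1 p1 + b2 p2).le_opNorm v)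
    have hB : c * ‖p2‖ ≤ ‖b2 p2‖ := by
      refine (h2 p2).trans (Real.iSup_le ?_ (norm_nonneg _))
      rintro ⟨v, hv0⟩
      have hvp : 0 < ‖v‖ := norm_pos_iff.2 hv0
      rw [div_le_iff₀ hvp]
      exact (le_abs_self _).trans ((b2 p2).le_opNorm v)
    have hB2 : c * ‖p2‖ ≤ N + M * ‖p1‖ := by
      have : ‖b2 p2‖ ≤ N + ‖b1 p1‖ := by
        have : b2 p2 = (b1 p1 + b2 p2) - b1 p1 := by abel
        rw [this]
        exact (norm_sub_le _ _)
      have hb1 : ‖b1 p1‖ ≤ M * ‖p1‖ := b1.le_opNorm p1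
      linarith
    have hfinal : c * c / (2 * (c + M)) * (‖p1‖ + ‖p2‖) ≤ N := by
      have hx : 0 ≤ ‖p1‖ := norm_nonneg _
      have hy : 0 ≤ ‖p2‖ := norm_nonneg _
      rw [div_mul_eq_mul_div, div_le_iff₀ (by positivity)]
      nlinarith [mul_nonneg hM0 hN0, mul_nonneg hc.le hN0]
    refine hfinal.trans ?_
    have := hw_norm_le_iSup (b1 p1 + b2 p2)
    simpa only [ContinuousLinearMap.add_apply] using this
end

section
/- Let A ∈ ℝ^{n×n} be symmetric positive definite, B ∈ ℝ^{m×n} have full row rank, and let R ∈ ℝ^{n×n}, M ∈ ℝ^{m×m} be symmetric positive definite matrices such that R is spectrally equivalent to A (there exist α₁, α₂ > 0 with α₁ vᵀRv ≤ vᵀAv ≤ α₂ vᵀRv for all v) and M is spectrally equivalent to the Schur complement B A⁻¹ Bᵀ (there exist γ₁, γ₂ > 0 with γ₁ qᵀMq ≤ qᵀBA⁻¹Bᵀq ≤ γ₂ qᵀMq for all q). Then every eigenvalue λ of the generalized eigenproblem [[A,Bᵀ],[B,0]] x = λ [[R,0],[0,M]] x satisfies λ ∈ [−C₁, −C₂]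 ∪ [C₃, C₄] for positive constants C₁, C₂, C₃, C₄ depending only on α₁, α₂, γ₁, γ₂. -/
set_option maxHeartbeats 4000000
open Matrix

private lemma dot_symm' {n : Type*} [Fintype n] {A : Matrix n n ℝ} (hA : Aᵀ = A)
    (u v : n → ℝ) : u ⬝ᵥ A *ᵥ v = v ⬝ᵥ A *ᵥ u := by
  calc u ⬝ᵥ A *ᵥ v = u ᵥ* A ⬝ᵥ v := dotProduct_mulVec u A v
    _ = (Aᵀ *ᵥ u) ⬝ᵥ v := by rw [mulVec_transpose]
    _ = (A *ᵥ u) ⬝ᵥ v := by rw [hA]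
    _ = v ⬝ᵥ A *ᵥ u := dotProduct_comm _ _

private lemma dot_trans' {m n : Type*} [Fintype m] [Fintype n] (B : Matrix m n ℝ)
    (v : n → ℝ) (q : m → ℝ) : v ⬝ᵥ Bᵀ *ᵥ q = (B *ᵥ v) ⬝ᵥ q := by
  rw [dotProduct_mulVec, vecMul_transpose]

private lemma psd_nonneg {n : Type*} [Fintype n] {A : Matrix n n ℝ} (hA : A.PosSemidef)
    (x : n → ℝ) : 0 ≤ x ⬝ᵥ A *ᵥ x := by simpa using hA.dotProduct_mulVec_nonneg x

private lemma pd_pos {n : Type*} [Fintype n] {A : Matrix n n ℝ} (hA : A.PosDef)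
    {x : n → ℝ} (hx : x ≠ 0) : 0 < x ⬝ᵥ A *ᵥ x := by simpa using hA.dotProduct_mulVec_pos hx

private lemma cs' {n : Type*} [Fintype n] {A : Matrix n n ℝ} (hA : A.PosSemidef)
    (u v : n → ℝ) : (u ⬝ᵥ A *ᵥ v)^2 ≤ (u ⬝ᵥ A *ᵥ u) * (v ⬝ᵥ A *ᵥ v) := by
  have hsym : Aᵀ = A := by
    have := hA.1
    rwa [Matrix.IsHermitian, conjTranspose_eq_transpose_of_trivial] at this
  have key : ∀ x : ℝ, 0 ≤ (v ⬝ᵥ A *ᵥ v) * (x * x) + (2 * (u ⬝ᵥ A *ᵥ v)) * x + u ⬝ᵥ A *ᵥ u := by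
    intro x
    have h0 : 0 ≤ (u + x • v) ⬝ᵥ A *ᵥ (u + x • v) := psd_nonneg hA _
    have h1 : v ⬝ᵥ A *ᵥ u = u ⬝ᵥ A *ᵥ v := dot_symm' hsym v u
    have expand : (u + x • v) ⬝ᵥ A *ᵥ (u + x • v)
        = (v ⬝ᵥ A *ᵥ v) * (x * x) + (2 * (u ⬝ᵥ A *ᵥ v)) * x + u ⬝ᵥ A *ᵥ u := by
      simp [mulVec_add, mulVec_smul, dotProduct_add, add_dotProduct, dotProduct_smul,
        smul_dotProduct, smul_eq_mul, h1]
      ring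
    linarith [expand ▸ h0]
  have hd := discrim_le_zero key
  rw [discrim] at hd
  nlinarith [hd]

/-- Optimality of the block-diagonal preconditioner blockdiag(R, M): the generalized
eigenvalues of the saddle point matrix lie in [-C₁,-C₂] ∪ [C₃,C₄] with positive constants
depending only on the spectral equivalence constants α₁, α₂, γ₁, γ₂. -/
theorem stmt_7 (α₁ α₂ γ₁ γ₂ : ℝ)
    (hα₁ : 0 < α₁) (hα₂ : 0 < α₂) (hγ₁ : 0 < γ₁) (hγ₂ : 0 < γ₂) :
    ∃ C₁ C₂ C₃ C₄ : ℝ, 0 < C₁ ∧ 0 < C₂ ∧ 0 < C₃ ∧ 0 < C₄ ∧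
      ∀ (n m : ℕ) (A R : Matrix (Fin n) (Fin n) ℝ)
        (B : Matrix (Fin m) (Fin n) ℝ) (M : Matrix (Fin m) (Fin m) ℝ),
        A.PosDef → R.PosDef → M.PosDef → B.rank = m →
        (∀ v : Fin n → ℝ,
          α₁ * (v ⬝ᵥ R.mulVec v) ≤ v ⬝ᵥ A.mulVec v ∧
          v ⬝ᵥ A.mulVec v ≤ α₂ * (v ⬝ᵥ R.mulVec v)) →
        (∀ q : Fin m → ℝ,
          γ₁ * (q ⬝ᵥ M.mulVec q) ≤ q ⬝ᵥ (B * A⁻¹ * Bᵀ).mulVec q ∧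
          q ⬝ᵥ (B * A⁻¹ * Bᵀ).mulVec q ≤ γ₂ * (q ⬝ᵥ M.mulVec q)) →
        ∀ (lam : ℝ) (x : Fin n ⊕ Fin m → ℝ), x ≠ 0 →
          (Matrix.fromBlocks A Bᵀ B 0).mulVec x
            = lam • (Matrix.fromBlocks R 0 0 M).mulVec x →
          lam ∈ Set.Icc (-C₁) (-C₂) ∪ Set.Icc C₃ C₄ := by
  set K : ℝ := α₁⁻¹ + 2 + α₂ with hK
  have hKpos : 0 < K := by positivity
  clear_value K
  refine ⟨Real.sqrt (α₂ * γ₂) + 1, min 1 (γ₁ * α₁ / K), α₁, α₂ + Real.sqrt (α₂ * γ₂),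
    by positivity, by positivity, hα₁, by positivity, ?_⟩
  intro n m A R B M hA hR hM hBrank hAR hS lam x hx heq
  set v : Fin n → ℝ := x ∘ Sum.inl with hv
  set q : Fin m → ℝ := x ∘ Sum.inr with hq
  have hx' : x = Sum.elim v q := by funext i; cases i <;> rfl
  rw [hx', fromBlocks_mulVec, fromBlocks_mulVec] at heq
  have h1 : A *ᵥ v + Bᵀ *ᵥ q = lam • (R *ᵥ v) := by
    funext i; have := congrFun heq (Sum.inl i); simpa using this
  have h2 : B *ᵥ v = lam • (M *ᵥ q) := by
    funext i; have := congrFun heq (Sum.inr i); simpa using this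
  clear heq
  -- symmetry facts
  have hAsym : Aᵀ = A := by
    have := hA.1; rwa [Matrix.IsHermitian, conjTranspose_eq_transpose_of_trivial] at this
  have hRsym : Rᵀ = R := by
    have := hR.1; rwa [Matrix.IsHermitian, conjTranspose_eq_transpose_of_trivial] at this
  -- invertibility of A
  haveI := hA.isUnit.invertible
  have hAinv : ∀ y : Fin n → ℝ, A *ᵥ (A⁻¹ *ᵥ y) = y := by
    intro y; rw [mulVec_mulVec, Matrix.mul_inv_of_invertible, one_mulVec]
  have hAinv' : ∀ y : Fin n → ℝ, A⁻¹ *ᵥ (A *ᵥ y) = y := by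
    intro y; rw [mulVec_mulVec, Matrix.inv_mul_of_invertible, one_mulVec]
  set w : Fin n → ℝ := A⁻¹ *ᵥ (Bᵀ *ᵥ q) with hw
  have hAw : A *ᵥ w = Bᵀ *ᵥ q := hAinv _
  set a : ℝ := v ⬝ᵥ A *ᵥ v with ha
  set r : ℝ := v ⬝ᵥ R *ᵥ v with hr
  set mq : ℝ := q ⬝ᵥ M *ᵥ q with hmq
  set s : ℝ := q ⬝ᵥ (B * A⁻¹ * Bᵀ) *ᵥ q with hs
  -- s = w ⬝ᵥ A *ᵥ w
  have hsw : s = w ⬝ᵥ A *ᵥ w := by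
    calc s = q ⬝ᵥ (B *ᵥ (A⁻¹ *ᵥ (Bᵀ *ᵥ q))) := by rw [hs, ← mulVec_mulVec, ← mulVec_mulVec]
      _ = (B *ᵥ w) ⬝ᵥ q := by rw [← hw, dotProduct_comm]
      _ = w ⬝ᵥ Bᵀ *ᵥ q := (dot_trans' B w q).symm
      _ = w ⬝ᵥ A *ᵥ w := by rw [← hAw]
  -- scalar equation e2 : w ⬝ᵥ A *ᵥ v = lam * mq
  have e2 : w ⬝ᵥ A *ᵥ v = lam * mq := by
    have hq2 : q ⬝ᵥ (B *ᵥ v) = lam * mq := by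
      rw [h2, dotProduct_smul, smul_eq_mul, hmq]
    calc w ⬝ᵥ A *ᵥ v = v ⬝ᵥ A *ᵥ w := dot_symm' hAsym w v
      _ = v ⬝ᵥ Bᵀ *ᵥ q := by rw [hAw]
      _ = (B *ᵥ v) ⬝ᵥ q := dot_trans' B v q
      _ = q ⬝ᵥ (B *ᵥ v) := dotProduct_comm _ _
      _ = lam * mq := hq2
  -- scalar equation e1 : a + lam * mq = lam * r
  have e1 : a + lam * mq = lam * r := by
    have := congrArg (fun y => v ⬝ᵥ y) h1
    simp only [dotProduct_add, dotProduct_smul, smul_eq_mul] at this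
    have hvB : v ⬝ᵥ Bᵀ *ᵥ q = lam * mq := by
      rw [← hAw, dot_symm' hAsym v w, e2]
    rw [hvB] at this
    exact this
  -- v ≠ 0
  have hv0 : v ≠ 0 := by
    intro hveq
    have hBq : Bᵀ *ᵥ q = 0 := by
      have := h1
      rw [hveq] at this
      simpa using this
    have hs0 : s = 0 := by
      rw [hsw, hw, hBq, mulVec_zero, mulVec_zero, dotProduct_zero]
    have hq0 : q = 0 := by
      by_contra hq0
      have := (hS q).1
      rw [← hmq, ← hs, hs0] at this
      have := pd_pos hM hq0
      nlinarith
    exact hx (by rw [hx', hveq, hq0]; funext i; cases i <;> rfl)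
  have hrpos : 0 < r := pd_pos hR hv0
  have haα₁ : α₁ * r ≤ a := by have := (hAR v).1; rw [← hr, ← ha] at this; exact this
  have haα₂ : a ≤ α₂ * r := by have := (hAR v).2; rw [← hr, ← ha] at this; exact this
  have hapos : 0 < a := lt_of_lt_of_le (by positivity) haα₁
  have hmqnn : 0 ≤ mq := psd_nonneg hM.posSemidef q
  have hsγ₁ : γ₁ * mq ≤ s := (hS q).1
  have hsγ₂ : s ≤ γ₂ * mq := (hS q).2
  -- Cauchy-Schwarz : (lam*mq)^2 ≤ s * a
  have hcs : (lam * mq)^2 ≤ s * a := by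
    have := cs' hA.posSemidef w v
    rw [e2, ← hsw, ← ha] at this
    exact this
  -- the auxiliary vector u and t ≤ r / α₁
  set u : Fin n → ℝ := A⁻¹ *ᵥ (R *ᵥ v) with hu
  have hAu : A *ᵥ u = R *ᵥ v := hAinv _
  set t : ℝ := u ⬝ᵥ R *ᵥ v with htdef
  have htAu : u ⬝ᵥ A *ᵥ u = t := by rw [hAu]
  have htnn : 0 ≤ t := by rw [← htAu]; exact psd_nonneg hA.posSemidef u
  have ht : α₁ * t ≤ r := by
    have hcsR : (u ⬝ᵥ R *ᵥ v)^2 ≤ (u ⬝ᵥ R *ᵥ u) * (v ⬝ᵥ R *ᵥ v) := cs' hR.posSemidef u v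
    have huR : α₁ * (u ⬝ᵥ R *ᵥ u) ≤ t := by
      have := (hAR u).1; rw [htAu] at this; exact this
    have huRnn : 0 ≤ u ⬝ᵥ R *ᵥ u := psd_nonneg hR.posSemidef u
    rcases eq_or_lt_of_le htnn with h0 | h0
    · nlinarith
    · rw [← htdef, ← hr] at hcsR
      nlinarith
  -- es : s = lam^2 * t - 2 * lam * r + a
  have hwE : w = lam • u - v := by
    have : Bᵀ *ᵥ q = lam • (R *ᵥ v) - A *ᵥ v := by
      rw [← h1]; abel
    rw [hw, this, mulVec_sub, mulVec_smul, hAinv', hu]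
  have es : s = lam^2 * t - 2 * lam * r + a := by
    have hwRv : w ⬝ᵥ R *ᵥ v = lam * t - r := by
      rw [hwE, sub_dotProduct, smul_dotProduct, smul_eq_mul, ← htdef, ← hr]
    have : s = lam * (w ⬝ᵥ R *ᵥ v) - w ⬝ᵥ A *ᵥ v := by
      calc s = w ⬝ᵥ A *ᵥ w := hsw
        _ = w ⬝ᵥ Bᵀ *ᵥ q := by rw [hAw]
        _ = w ⬝ᵥ (lam • (R *ᵥ v) - A *ᵥ v) := by
            congr 1; rw [← h1]; abel
        _ = lam * (w ⬝ᵥ R *ᵥ v) - w ⬝ᵥ A *ᵥ v := by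
            rw [dotProduct_sub, dotProduct_smul, smul_eq_mul]
    rw [this, hwRv, e2]
    nlinarith [e1]
  -- make everything scalar and discard matrix context
  clear_value a r mq s t
  clear hsw e2 hwE htAu htdef hs hmq ha hr hAw hAinv hAinv' hw hu hAu h1 h2 hAsym hRsym
    hAR hS hx' hv0 hx u w hBrank hA hR hM this A R B M x hv hq v q
  -- final case analysis
  have hsqnn : 0 ≤ Real.sqrt (α₂ * γ₂) := Real.sqrt_nonneg _
  have hsq : Real.sqrt (α₂ * γ₂) ^ 2 = α₂ * γ₂ := Real.sq_sqrt (by positivity)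
  rcases lt_trichotomy lam 0 with hl | hl | hl
  · -- negative eigenvalue
    left
    have hmqr : r < mq := by nlinarith [e1]
    have hmqpos : 0 < mq := lt_trans hrpos hmqr
    constructor
    · -- lam ≥ -(sqrt(α₂γ₂)+1)
      have hsnn : 0 ≤ s := le_trans (mul_nonneg hγ₁.le hmqnn) hsγ₁
      have h7 : s * a ≤ (γ₂ * mq) * (α₂ * r) :=
        mul_le_mul hsγ₂ haα₂ hapos.le (mul_nonneg hγ₂.le hmqnn)
      have h8 : (γ₂ * mq) * (α₂ * r) ≤ (α₂ * γ₂) * mq^2 := by nlinarith [hmqpos, hmqr]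
      have hb : (lam * mq)^2 ≤ (α₂ * γ₂) * mq^2 := le_trans hcs (le_trans h7 h8)
      have hlam2 : lam^2 ≤ α₂ * γ₂ := by
        nlinarith [mul_pos hmqpos hmqpos, hb]
      nlinarith [hsq, hsqnn, hl, hlam2]
    · -- lam ≤ -C₂
      have hC₂le1 : min 1 (γ₁ * α₁ / K) ≤ 1 := min_le_left _ _
      have hC₂leq : min 1 (γ₁ * α₁ / K) ≤ γ₁ * α₁ / K := min_le_right _ _
      by_contra hcon
      push_neg at hcon
      set μ : ℝ := -lam with hμ
      clear_value μ
      have hμpos : 0 < μ := by simp [hμ]; exact hl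
      have hμlt : μ < min 1 (γ₁ * α₁ / K) := by rw [hμ]; linarith
      have hμ1 : μ ≤ 1 := le_of_lt (lt_of_lt_of_le hμlt hC₂le1)
      have hμK : μ < γ₁ * α₁ / K := lt_of_lt_of_le hμlt hC₂leq
      have hγmq : γ₁ * mq ≤ μ^2 * t + 2 * μ * r + a := by
        have : s = μ^2 * t + 2 * μ * r + a := by rw [es, hμ]; ring
        linarith [hsγ₁]
      have hμmq : μ * mq = μ * r + a := by
        rw [hμ]; ring_nf; ring_nf at e1; linarith [e1]
      have h3 : γ₁ * (μ * r + a) ≤ μ * (μ^2 * t + 2 * μ * r + a) := by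
        calc γ₁ * (μ * r + a) = μ * (γ₁ * mq) := by rw [← hμmq]; ring
          _ ≤ μ * (μ^2 * t + 2 * μ * r + a) :=
              mul_le_mul_of_nonneg_left hγmq (le_of_lt hμpos)
      have hμ2 : μ^2 ≤ μ := by nlinarith [mul_nonneg (sub_nonneg.mpr hμ1) hμpos.le]
      have hir : 0 ≤ α₁⁻¹ * r := by positivity
      have htle : t ≤ α₁⁻¹ * r := by
        rw [inv_mul_eq_div, le_div_iff₀ hα₁]; linarith
      have hμt : μ^2 * t ≤ μ^2 * (α₁⁻¹ * r) :=
        mul_le_mul_of_nonneg_left htle (sq_nonneg μ)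
      have h5a : μ^2 * (α₁⁻¹ * r) ≤ α₁⁻¹ * r := by
        have := mul_le_mul_of_nonneg_right (hμ2.trans hμ1) hir
        simpa using this
      have h5b : 2 * μ * r ≤ 2 * r := by
        nlinarith [mul_nonneg (sub_nonneg.mpr hμ1) hrpos.le]
      have h5 : μ^2 * t + 2 * μ * r + a ≤ K * r := by
        have hKr : K * r = α₁⁻¹ * r + 2 * r + α₂ * r := by rw [hK]; ring
        linarith [hμt, h5a, h5b, haα₂]
      have h4 : μ * (μ^2 * t + 2 * μ * r + a) ≤ μ * K * r := by
        nlinarith [mul_le_mul_of_nonneg_left h5 hμpos.le]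
      have h6 : γ₁ * α₁ * r ≤ γ₁ * (μ * r + a) := by
        nlinarith [mul_le_mul_of_nonneg_left haα₁ hγ₁.le,
          mul_nonneg hγ₁.le (mul_nonneg hμpos.le hrpos.le)]
      have key : γ₁ * α₁ ≤ μ * K := by nlinarith [h3, h4, h6, hrpos]
      have hlast : μ * K < (γ₁ * α₁ / K) * K := mul_lt_mul_of_pos_right hμK hKpos
      rw [div_mul_cancel₀ _ (ne_of_gt hKpos)] at hlast
      linarith
  · -- lam = 0 impossible
    exfalso
    rw [hl] at e1
    simp at e1
    linarith
  · -- positive eigenvalue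
    right
    have hmqr : mq < r := by nlinarith [e1]
    constructor
    · -- α₁ ≤ lam
      have h9 : α₁ * r ≤ lam * r := by linarith [mul_nonneg hl.le hmqnn, haα₁, e1]
      exact le_of_mul_le_mul_right h9 hrpos
    · -- lam ≤ α₂ + sqrt(α₂γ₂)
      have h7 : s * a ≤ (γ₂ * mq) * (α₂ * r) :=
        mul_le_mul hsγ₂ haα₂ hapos.le (mul_nonneg hγ₂.le hmqnn)
      have h8 : (γ₂ * mq) * (α₂ * r) ≤ (Real.sqrt (α₂ * γ₂) * r)^2 := by
        have hx1 : (Real.sqrt (α₂ * γ₂) * r)^2 = γ₂ * α₂ * (r * r) := by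
          rw [mul_pow, hsq]; ring
        have hx2 : 0 ≤ γ₂ * α₂ * (r * (r - mq)) :=
          mul_nonneg (mul_nonneg hγ₂.le hα₂.le) (mul_nonneg hrpos.le (sub_nonneg.mpr hmqr.le))
        nlinarith [hx1, hx2]
      have hb : (lam * mq)^2 ≤ (Real.sqrt (α₂ * γ₂) * r)^2 := le_trans hcs (le_trans h7 h8)
      have hlmq : lam * mq ≤ Real.sqrt (α₂ * γ₂) * r := by
        have h0 : 0 ≤ lam * mq := mul_nonneg hl.le hmqnn
        have h1 : 0 ≤ Real.sqrt (α₂ * γ₂) * r := by positivity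
        nlinarith [hb, h0, h1]
      have h10 : lam * r ≤ (α₂ + Real.sqrt (α₂ * γ₂)) * r := by
        have : lam * r = a + lam * mq := e1.symm
        nlinarith [haα₂, hlmq]
      exact le_of_mul_le_mul_right h10 hrpos
end
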